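/- arXiv:2110.06302 — 2 statements merged into one kernel-verified Lean document; each statement's English description precedes it below -/
import Mathlib

section
/- Let $G$ be a locally compact group, $1 < p < \infty$ with conjugate exponent $q$, and let $\Delta$ denote the modular function of $G$. If $f \in L^p(G)$ is such that $g * f$ exists and lies in $L^p(G)$ for all $g \in L^p(G)$ with $\|f\|_p^T := \sup\{\|g*f\|_p : g \in L^p(G), \|g\|_p \le 1\} < \infty$, then for every $x \in G$ the function $f * \delta_x$ (right translate weighted appropriately) also has this property, and $\|f * \delta_x\|_p^T = \Delta(x)^{-1/q} \|f\|_p^T$. -/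
open MeasureTheory ENNReal

/-- Convolution `g * f` on a (multiplicative) group: `(g*f)(x) = ∫ g(y) f(y⁻¹x) dμ(y)`. -/
noncomputable def conv {G : Type*} [Group G] [MeasurableSpace G] (μ : Measure G)
    (g f : G → ℂ) : G → ℂ :=
  fun x => ∫ y, g y * f (y⁻¹ * x) ∂μ

/-- `g * f` exists: the defining integrand is integrable for a.e. `x`. -/
def ConvExists {G : Type*} [Group G] [MeasurableSpace G] (μ : Measure G)
    (g f : G → ℂ) : Prop :=
  ∀ᵐ x ∂μ, Integrable (fun y => g y * f (y⁻¹ * x)) μ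

/-- `f ∈ L^T_p(G)`: `f ∈ L^p` and for all `g ∈ L^p`, `g * f` exists and lies in `L^p`. -/
def MemLT {G : Type*} [Group G] [MeasurableSpace G] (μ : Measure G) (p : ℝ≥0∞)
    (f : G → ℂ) : Prop :=
  MemLp f p μ ∧ ∀ g : G → ℂ, MemLp g p μ → ConvExists μ g f ∧ MemLp (conv μ g f) p μ

/-- The norm `‖f‖_p^T = sup {‖g*f‖_p : g ∈ L^p, ‖g‖_p ≤ 1}` (in `ℝ≥0∞`). -/
noncomputable def normT {G : Type*} [Group G] [MeasurableSpace G] (μ : Measure G)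
    (p : ℝ≥0∞) (f : G → ℂ) : ℝ≥0∞ :=
  ⨆ (g : G → ℂ) (_ : MemLp g p μ ∧ eLpNorm g p μ ≤ 1), eLpNorm (conv μ g f) p μ

theorem stmt1 {G : Type*} [Group G] [TopologicalSpace G] [IsTopologicalGroup G]
    [LocallyCompactSpace G] [MeasurableSpace G] [BorelSpace G]
    (μ : Measure G) [μ.IsHaarMeasure]
    (p : ℝ≥0∞) (hp1 : 1 < p) (hp : p ≠ ∞) (q : ℝ) (hpq : p.toReal⁻¹ + q⁻¹ = 1)
    (Δ : G → ℝ) (hΔpos : ∀ x, 0 < Δ x)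
    (hΔ : ∀ (x : G) (s : Set G), MeasurableSet s →
      μ ((fun y => y * x⁻¹) ⁻¹' s) = ENNReal.ofReal (Δ x) * μ s)
    (f : G → ℂ) (hf : MemLT μ p f) (x : G) :
    MemLT μ p (fun y => ((Δ x : ℂ))⁻¹ * f (y * x⁻¹)) ∧
    normT μ p (fun y => ((Δ x : ℂ))⁻¹ * f (y * x⁻¹)) =
      ENNReal.ofReal (Δ x ^ (-(1 / q))) * normT μ p f := by
  obtain ⟨hfLp, hfT⟩ := hf
  have hD : (0:ℝ) < Δ x := hΔpos x
  set c : ℝ≥0∞ := ENNReal.ofReal (Δ x) with hcdef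
  have hctop : c ≠ ∞ := ENNReal.ofReal_ne_top
  have hc0 : c ≠ 0 := (ENNReal.ofReal_pos.2 hD).ne'
  let T : G ≃ᵐ G := MeasurableEquiv.mulRight x⁻¹
  have hTfun : ∀ y, T y = y * x⁻¹ := fun y => rfl
  have hmap : Measure.map T μ = c • μ := by
    ext s hs
    rw [MeasurableEquiv.map_apply]
    show μ ((fun y => y * x⁻¹) ⁻¹' s) = (c • μ) s
    rw [hΔ x s hs]
    simp [hcdef]
  -- translate MemLp
  have hMem : ∀ h : G → ℂ, MemLp h p μ →
      MemLp (fun w => ((Δ x : ℂ))⁻¹ * h (w * x⁻¹)) p μ := by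
    intro h hh
    have h1 : MemLp h p (Measure.map T μ) := by
      rw [hmap]; exact hh.smul_measure hctop
    have h2 : MemLp (h ∘ T) p μ := T.measurableEmbedding.memLp_map_measure_iff.1 h1
    exact h2.const_mul _
  -- key eLpNorm computation
  have hK : (‖((Δ x : ℂ))⁻¹‖₊ : ℝ≥0∞) * c ^ (1/p).toReal
      = ENNReal.ofReal (Δ x ^ (-(1 / q))) := by
    have hn : (‖((Δ x : ℂ))⁻¹‖₊ : ℝ≥0∞) = ENNReal.ofReal ((Δ x)⁻¹) := by
      rw [← enorm_eq_nnnorm, ← ofReal_norm]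
      congr 1
      rw [norm_inv, Complex.norm_real, Real.norm_eq_abs, abs_of_pos hD]
    have hr : (1/p).toReal = p.toReal⁻¹ := by
      simp [one_div, ENNReal.toReal_inv]
    have hcr : c ^ (1/p).toReal = ENNReal.ofReal (Δ x ^ p.toReal⁻¹) := by
      rw [hr, hcdef, ← ENNReal.ofReal_rpow_of_pos hD]
    rw [hn, hcr, ← ENNReal.ofReal_mul (by positivity)]
    congr 1
    rw [show (Δ x)⁻¹ = Δ x ^ (-1:ℝ) by rw [Real.rpow_neg_one], ← Real.rpow_add hD]
    congr 1
    have : (1:ℝ)/q = q⁻¹ := one_div q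
    linarith
  have key : ∀ h : G → ℂ, eLpNorm (fun w => ((Δ x : ℂ))⁻¹ * h (w * x⁻¹)) p μ
      = ENNReal.ofReal (Δ x ^ (-(1 / q))) * eLpNorm h p μ := by
    intro h
    have e1 : (fun w => ((Δ x : ℂ))⁻¹ * h (w * x⁻¹)) = ((Δ x : ℂ))⁻¹ • (h ∘ T) := rfl
    rw [e1, eLpNorm_const_smul, ← T.measurableEmbedding.eLpNorm_map_measure, hmap,
      eLpNorm_smul_measure_of_ne_top hp, smul_eq_mul, ← mul_assoc, enorm_eq_nnnorm, hK]
  -- conv identity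
  have hconv : ∀ g : G → ℂ,
      conv μ g (fun y => ((Δ x : ℂ))⁻¹ * f (y * x⁻¹))
        = fun w => ((Δ x : ℂ))⁻¹ * (conv μ g f) (w * x⁻¹) := by
    intro g
    funext w
    show (∫ z, g z * (((Δ x : ℂ))⁻¹ * f ((z⁻¹ * w) * x⁻¹)) ∂μ)
      = ((Δ x : ℂ))⁻¹ * ∫ z, g z * f (z⁻¹ * (w * x⁻¹)) ∂μ
    rw [← integral_const_mul]
    congr 1
    funext z
    rw [mul_assoc z⁻¹ w x⁻¹]
    ring
  -- ConvExists and MemLp of conv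
  have hCE : ∀ g : G → ℂ, MemLp g p μ →
      ConvExists μ g (fun y => ((Δ x : ℂ))⁻¹ * f (y * x⁻¹)) := by
    intro g hg
    obtain ⟨hce, _⟩ := hfT g hg
    have h1 : ∀ᵐ w ∂(Measure.map T μ), Integrable (fun z => g z * f (z⁻¹ * w)) μ := by
      rw [hmap]; exact MeasureTheory.Measure.ae_smul_measure hce c
    have h2 : ∀ᵐ w ∂μ, Integrable (fun z => g z * f (z⁻¹ * (w * x⁻¹))) μ :=
      T.measurableEmbedding.ae_map_iff.1 h1
    filter_upwards [h2] with w hw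
    have h3 := hw.const_mul ((Δ x : ℂ))⁻¹
    have h4 : (fun z => ((Δ x : ℂ))⁻¹ * (g z * f (z⁻¹ * (w * x⁻¹))))
        = fun z => g z * (((Δ x : ℂ))⁻¹ * f (z⁻¹ * w * x⁻¹)) := by
      funext z
      rw [mul_assoc z⁻¹ w x⁻¹]
      ring
    rw [h4] at h3
    exact h3
  have hMemconv : ∀ g : G → ℂ, MemLp g p μ →
      MemLp (conv μ g (fun y => ((Δ x : ℂ))⁻¹ * f (y * x⁻¹))) p μ := by
    intro g hg
    rw [hconv g]
    exact hMem _ (hfT g hg).2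
  refine ⟨⟨hMem f hfLp, fun g hg => ⟨hCE g hg, hMemconv g hg⟩⟩, ?_⟩
  -- norm identity
  unfold normT
  rw [ENNReal.mul_iSup]
  congr 1
  funext g
  rw [ENNReal.mul_iSup]
  congr 1
  funext _
  rw [hconv g, key]
end

section
/- Let $G$ be a locally compact group, $1 < p < \infty$ with conjugate exponent $q$, and $f \in L^T_p(G)$. Then for every $x \in G$, the left translate $\delta_x * f$ belongs to $L^T_p(G)$ and $\|\delta_x * f\|_p^T = \Delta(x)^{-1/q} \|f\|_p^T$. -/
open MeasureTheory ENNReal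

section Aux

variable {G : Type*} [Group G] [MeasurableSpace G] [MeasurableMul G]
  {μ : Measure G} {Δ : G → ℝ}

/-- The pushforward of `μ` under right translation is a scalar multiple of `μ`. -/
lemma map_mulRight_eq (hΔ : ∀ (x : G) (s : Set G), MeasurableSet s →
      μ ((fun y => y * x⁻¹) ⁻¹' s) = ENNReal.ofReal (Δ x) * μ s) (x : G) :
    Measure.map (MeasurableEquiv.mulRight x⁻¹) μ = ENNReal.ofReal (Δ x) • μ := by
  ext s hs
  rw [MeasurableEquiv.map_apply, Measure.smul_apply, smul_eq_mul]
  exact hΔ x s hs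

lemma integral_mulRight (hΔpos : ∀ x, 0 < Δ x)
    (hΔ : ∀ (x : G) (s : Set G), MeasurableSet s →
      μ ((fun y => y * x⁻¹) ⁻¹' s) = ENNReal.ofReal (Δ x) * μ s) (x : G) (H : G → ℂ) :
    ∫ t, H (t * x⁻¹) ∂μ = Δ x • ∫ t, H t ∂μ := by
  have h := MeasureTheory.integral_map_equiv (μ := μ) (MeasurableEquiv.mulRight x⁻¹) H
  rw [map_mulRight_eq hΔ, integral_smul_measure,
    ENNReal.toReal_ofReal (hΔpos x).le] at h
  simpa using h.symm

lemma conv_translate (hΔpos : ∀ x, 0 < Δ x)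
    (hΔ : ∀ (x : G) (s : Set G), MeasurableSet s →
      μ ((fun y => y * x⁻¹) ⁻¹' s) = ENNReal.ofReal (Δ x) * μ s)
    (x : G) (g f : G → ℂ) (y : G) :
    conv μ (fun t => g (t * x⁻¹)) f y
      = Δ x • conv μ g (fun z => f (x⁻¹ * z)) y := by
  have key : (fun t => g (t * x⁻¹) * f (t⁻¹ * y))
      = fun t => (fun s => g s * f (x⁻¹ * (s⁻¹ * y))) (t * x⁻¹) := by
    funext t
    simp only []
    congr 2
    group
  simp only [conv]
  rw [key, integral_mulRight hΔpos hΔ x (fun s => g s * f (x⁻¹ * (s⁻¹ * y)))]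

lemma conv_translate' (hΔpos : ∀ x, 0 < Δ x)
    (hΔ : ∀ (x : G) (s : Set G), MeasurableSet s →
      μ ((fun y => y * x⁻¹) ⁻¹' s) = ENNReal.ofReal (Δ x) * μ s)
    (x : G) (g f : G → ℂ) (y : G) :
    conv μ g (fun z => f (x⁻¹ * z)) y
      = (Δ x)⁻¹ • conv μ (fun t => g (t * x⁻¹)) f y := by
  rw [conv_translate hΔpos hΔ x g f y, smul_smul, inv_mul_cancel₀ (hΔpos x).ne',
    one_smul]

lemma eLpNorm_comp_mulRight (hΔ : ∀ (x : G) (s : Set G), MeasurableSet s →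
      μ ((fun y => y * x⁻¹) ⁻¹' s) = ENNReal.ofReal (Δ x) * μ s)
    (p : ℝ≥0∞) (hp : p ≠ ∞) (x : G) (g : G → ℂ) (hg : AEStronglyMeasurable g μ) :
    eLpNorm (fun t => g (t * x⁻¹)) p μ
      = ENNReal.ofReal (Δ x) ^ (1 / p).toReal * eLpNorm g p μ := by
  have hmap := map_mulRight_eq hΔ x
  have hg' : AEStronglyMeasurable g
      (Measure.map (MeasurableEquiv.mulRight x⁻¹) μ) := by
    rw [hmap]; exact hg.mono_ac Measure.smul_absolutelyContinuous
  have h := eLpNorm_map_measure (p := p) hg'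
    (MeasurableEquiv.mulRight x⁻¹).measurable.aemeasurable
  rw [hmap, eLpNorm_smul_measure_of_ne_top hp] at h
  rw [show (fun t => g (t * x⁻¹)) = g ∘ (MeasurableEquiv.mulRight x⁻¹) from rfl, ← h,
    smul_eq_mul]

lemma memLp_comp_mulRight (hΔpos : ∀ x, 0 < Δ x)
    (hΔ : ∀ (x : G) (s : Set G), MeasurableSet s →
      μ ((fun y => y * x⁻¹) ⁻¹' s) = ENNReal.ofReal (Δ x) * μ s)
    (p : ℝ≥0∞) (hp : p ≠ ∞) (x : G) (g : G → ℂ) (hg : MemLp g p μ) :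
    MemLp (fun t => g (t * x⁻¹)) p μ := by
  have hmap := map_mulRight_eq hΔ x
  have hg' : AEStronglyMeasurable g
      (Measure.map (MeasurableEquiv.mulRight x⁻¹) μ) := by
    rw [hmap]; exact hg.1.mono_ac Measure.smul_absolutelyContinuous
  refine ⟨hg'.comp_aemeasurable (MeasurableEquiv.mulRight x⁻¹).measurable.aemeasurable, ?_⟩
  rw [eLpNorm_comp_mulRight hΔ p hp x g hg.1]
  exact ENNReal.mul_lt_top
    (ENNReal.rpow_lt_top_of_nonneg ENNReal.toReal_nonneg ENNReal.ofReal_ne_top) hg.2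

end Aux

section Aux2

variable {G : Type*} [Group G] [MeasurableSpace G] [MeasurableMul G]
  {μ : Measure G} {Δ : G → ℝ}

/-- The key one-sided estimate for the translate's `normT`. -/
lemma normT_translate_le
    (p : ℝ≥0∞) (hp1 : 1 < p) (hp : p ≠ ∞) (q : ℝ) (hpq : p.toReal⁻¹ + q⁻¹ = 1)
    (hΔpos : ∀ x, 0 < Δ x)
    (hΔ : ∀ (x : G) (s : Set G), MeasurableSet s →
      μ ((fun y => y * x⁻¹) ⁻¹' s) = ENNReal.ofReal (Δ x) * μ s)
    (f : G → ℂ) (x : G) :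
    normT μ p (fun y => f (x⁻¹ * y))
      ≤ ENNReal.ofReal (Δ x ^ (-(1 / q))) * normT μ p f := by
  have hd : (0:ℝ) < Δ x := hΔpos x
  set r : ℝ := (1 / p).toReal with hrdef
  have hr : r = (p.toReal)⁻¹ := by rw [hrdef, one_div, ENNReal.toReal_inv]
  have hre : r - 1 = -(1 / q) := by
    rw [hr, one_div]
    linarith
  refine iSup₂_le fun g hg => ?_
  set a : ℝ := Δ x ^ (-r) with ha
  have hapos : 0 < a := Real.rpow_pos_of_pos hd _
  set g' : G → ℂ := a • fun t => g (t * x⁻¹) with hg'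
  have hge : MemLp (fun t => g (t * x⁻¹)) p μ :=
    memLp_comp_mulRight hΔpos hΔ p hp x g hg.1
  have hg'mem : MemLp g' p μ := hge.const_smul a
  have hg'norm : eLpNorm g' p μ ≤ 1 := by
    rw [hg', eLpNorm_const_smul, eLpNorm_comp_mulRight hΔ p hp x g hg.1.1]
    have h1 : ((‖a‖₊ : ℝ≥0∞)) = ENNReal.ofReal a := Real.enorm_eq_ofReal hapos.le
    have h2 : ENNReal.ofReal a = ENNReal.ofReal (Δ x) ^ (-r) := by
      rw [ha]; exact (ENNReal.ofReal_rpow_of_pos hd).symm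
    have hc0 : ENNReal.ofReal (Δ x) ≠ 0 := by
      simp [ENNReal.ofReal_eq_zero, not_le, hd]
    calc (‖a‖₊ : ℝ≥0∞) • (ENNReal.ofReal (Δ x) ^ (1 / p).toReal * eLpNorm g p μ)
        = (ENNReal.ofReal (Δ x) ^ (-r) * ENNReal.ofReal (Δ x) ^ r) * eLpNorm g p μ := by
          rw [smul_eq_mul, h1, h2, ← hrdef, mul_assoc]
      _ = eLpNorm g p μ := by
          rw [← ENNReal.rpow_add _ _ hc0 ENNReal.ofReal_ne_top]
          simp
      _ ≤ 1 := hg.2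
  have hconv : ∀ y, conv μ g (fun z => f (x⁻¹ * z)) y
      = (((Δ x)⁻¹ * a⁻¹ : ℝ)) • conv μ g' f y := by
    intro y
    have h1 := conv_translate' hΔpos hΔ x g f y
    have h2 : conv μ g' f y = a • conv μ (fun t => g (t * x⁻¹)) f y := by
      simp only [conv, hg', Pi.smul_apply, smul_mul_assoc]
      exact integral_smul a _
    rw [h1, h2, smul_smul, mul_assoc, inv_mul_cancel₀ hapos.ne', mul_one]
  have hle : eLpNorm (conv μ g' f) p μ ≤ normT μ p f :=
    le_iSup_of_le g' (le_iSup_of_le ⟨hg'mem, hg'norm⟩ le_rfl)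
  have heq : eLpNorm (conv μ g (fun z => f (x⁻¹ * z))) p μ
      = ‖((Δ x)⁻¹ * a⁻¹ : ℝ)‖ₑ * eLpNorm (conv μ g' f) p μ := by
    rw [show conv μ g (fun z => f (x⁻¹ * z))
        = ((Δ x)⁻¹ * a⁻¹ : ℝ) • conv μ g' f from funext hconv, eLpNorm_const_smul]
  have hcpos : (0:ℝ) < (Δ x)⁻¹ * a⁻¹ := by positivity
  have hcval : ((Δ x)⁻¹ * a⁻¹ : ℝ) = Δ x ^ (-(1 / q)) := by
    rw [ha, ← Real.rpow_neg_one (Δ x), ← Real.rpow_neg hd.le, neg_neg,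
      ← Real.rpow_add hd, show (-1 + r : ℝ) = r - 1 by ring, hre]
  rw [heq, Real.enorm_eq_ofReal hcpos.le, hcval]
  exact mul_le_mul_right hle _

lemma Delta_inv (hΔpos : ∀ x, 0 < Δ x)
    (hΔ : ∀ (x : G) (s : Set G), MeasurableSet s →
      μ ((fun y => y * x⁻¹) ⁻¹' s) = ENNReal.ofReal (Δ x) * μ s)
    (U : Set G) (hUm : MeasurableSet U) (hU0 : μ U ≠ 0) (hUtop : μ U ≠ ∞) (x : G) :
    Δ x⁻¹ = (Δ x)⁻¹ := by
  set A : Set G := (fun y => y * x⁻¹) ⁻¹' U with hA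
  have hAm : MeasurableSet A := (measurable_mul_const x⁻¹) hUm
  have h1 : μ A = ENNReal.ofReal (Δ x) * μ U := hΔ x U hUm
  have h2 : μ ((fun y => y * x⁻¹⁻¹) ⁻¹' A) = ENNReal.ofReal (Δ x⁻¹) * μ A :=
    hΔ x⁻¹ A hAm
  have h3 : (fun y => y * x⁻¹⁻¹) ⁻¹' A = U := by
    ext y
    simp [hA, Set.mem_preimage, mul_assoc]
  rw [h3, h1, ← mul_assoc] at h2
  have hm := ENNReal.mul_inv_cancel hU0 hUtop
  have h5 : ENNReal.ofReal (Δ x⁻¹) * ENNReal.ofReal (Δ x) = 1 := by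
    calc ENNReal.ofReal (Δ x⁻¹) * ENNReal.ofReal (Δ x)
        = (ENNReal.ofReal (Δ x⁻¹) * ENNReal.ofReal (Δ x)) * (μ U * (μ U)⁻¹) := by
          rw [hm, mul_one]
      _ = ((ENNReal.ofReal (Δ x⁻¹) * ENNReal.ofReal (Δ x)) * μ U) * (μ U)⁻¹ := by
          ring
      _ = μ U * (μ U)⁻¹ := by rw [← h2]
      _ = 1 := hm
  rw [← ENNReal.ofReal_mul (hΔpos x⁻¹).le, ENNReal.ofReal_eq_one] at h5
  exact eq_inv_of_mul_eq_one_left h5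

end Aux2

theorem stmt2 {G : Type*} [Group G] [TopologicalSpace G] [IsTopologicalGroup G]
    [LocallyCompactSpace G] [MeasurableSpace G] [BorelSpace G]
    (μ : Measure G) [μ.IsHaarMeasure]
    (p : ℝ≥0∞) (hp1 : 1 < p) (hp : p ≠ ∞) (q : ℝ) (hpq : p.toReal⁻¹ + q⁻¹ = 1)
    (Δ : G → ℝ) (hΔpos : ∀ x, 0 < Δ x)
    (hΔ : ∀ (x : G) (s : Set G), MeasurableSet s →
      μ ((fun y => y * x⁻¹) ⁻¹' s) = ENNReal.ofReal (Δ x) * μ s)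
    (f : G → ℂ) (hf : MemLT μ p f) (x : G) :
    MemLT μ p (fun y => f (x⁻¹ * y)) ∧
    normT μ p (fun y => f (x⁻¹ * y)) =
      ENNReal.ofReal (Δ x ^ (-(1 / q))) * normT μ p f := by
  have hd : (0:ℝ) < Δ x := hΔpos x
  constructor
  · -- MemLT
    constructor
    · exact hf.1.comp_measurePreserving (measurePreserving_mul_left μ x⁻¹)
    · intro g hg
      have hge : MemLp (fun t => g (t * x⁻¹)) p μ :=
        memLp_comp_mulRight hΔpos hΔ p hp x g hg
      obtain ⟨hce, hcm⟩ := hf.2 _ hge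
      constructor
      · -- ConvExists
        filter_upwards [hce] with y hy
        have hc0 : ENNReal.ofReal (Δ x) ≠ 0 := by
          simp [ENNReal.ofReal_eq_zero, not_le, hd]
        have key : (fun t => g (t * x⁻¹) * f (t⁻¹ * y))
            = (fun s => g s * f (x⁻¹ * (s⁻¹ * y))) ∘ (MeasurableEquiv.mulRight x⁻¹) := by
          funext t
          simp only [Function.comp, MeasurableEquiv.coe_mulRight]
          congr 2
          group
        rw [key] at hy
        have hy2 : Integrable (fun s => g s * f (x⁻¹ * (s⁻¹ * y)))
            (Measure.map (MeasurableEquiv.mulRight x⁻¹) μ) :=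
          (integrable_map_equiv (MeasurableEquiv.mulRight x⁻¹) _).mpr hy
        rw [map_mulRight_eq hΔ] at hy2
        exact (integrable_smul_measure hc0 ENNReal.ofReal_ne_top).mp hy2
      · -- MemLp of conv
        have heq : conv μ g (fun y => f (x⁻¹ * y))
            = (Δ x)⁻¹ • conv μ (fun t => g (t * x⁻¹)) f :=
          funext fun y => conv_translate' hΔpos hΔ x g f y
        rw [heq]
        exact hcm.const_smul _
  · -- normT equality
    set k := ENNReal.ofReal (Δ x ^ (-(1 / q))) with hk
    set k' := ENNReal.ofReal (Δ x ^ (1 / q)) with hk'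
    have hkk' : k * k' = 1 := by
      rw [hk, hk', ← ENNReal.ofReal_mul (Real.rpow_pos_of_pos hd _).le,
        ← Real.rpow_add hd, neg_add_cancel, Real.rpow_zero, ENNReal.ofReal_one]
    have hle1 : normT μ p (fun y => f (x⁻¹ * y)) ≤ k * normT μ p f :=
      normT_translate_le p hp1 hp q hpq hΔpos hΔ f x
    -- reverse direction, applied to x⁻¹ and the translated function
    have hDi : Δ x⁻¹ = (Δ x)⁻¹ := by
      obtain ⟨K, hK, h1K⟩ := exists_compact_mem_nhds (1 : G)
      refine Delta_inv hΔpos hΔ (interior K) isOpen_interior.measurableSet ?_ ?_ x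
      · exact (isOpen_interior.measure_pos μ
          ⟨1, mem_interior_iff_mem_nhds.mpr h1K⟩).ne'
      · exact ((measure_mono interior_subset).trans_lt hK.measure_lt_top).ne
    have hle2 : normT μ p f ≤ k' * normT μ p (fun y => f (x⁻¹ * y)) := by
      have h := normT_translate_le p hp1 hp q hpq hΔpos hΔ
        (fun y => f (x⁻¹ * y)) x⁻¹
      have hfun : (fun y => (fun z => f (x⁻¹ * z)) (x⁻¹⁻¹ * y)) = f := by
        funext y
        simp [inv_inv, inv_mul_cancel_left]
      have hcoef : ENNReal.ofReal (Δ x⁻¹ ^ (-(1 / q))) = k' := by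
        rw [hDi, hk', Real.inv_rpow hd.le, ← Real.rpow_neg hd.le, neg_neg]
      rw [hfun, hcoef] at h
      exact h
    refine le_antisymm hle1 ?_
    calc k * normT μ p f ≤ k * (k' * normT μ p (fun y => f (x⁻¹ * y))) :=
          mul_le_mul_right hle2 _
      _ = (k * k') * normT μ p (fun y => f (x⁻¹ * y)) := by rw [mul_assoc]
      _ = normT μ p (fun y => f (x⁻¹ * y)) := by rw [hkk', one_mul]
end
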